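/- For every finite simple graph G and every commutative ring R with unity, mz(G) ≤ γ_R(G); that is, |V(G)| minus the zero forcing number of G is at most the algebraic co-rank of G over R. -/

import Mathlib

open scoped Classical

variable {V : Type*}

/-- The generalized Laplacian matrix `L(G, X_G)` of a simple graph `G`, with entries in the
polynomial ring `R[X_G]`: the `(u,v)` entry is the indeterminate `x_u` if `u = v`,
`-1` if `u` and `v` are adjacent, and `0` otherwise. -/
noncomputable def genLaplacian (R : Type*) [CommRing R] (G : SimpleGraph V) :
    Matrix V V (MvPolynomial V R) := fun u v =>
  if u = v then MvPolynomial.X u else if G.Adj u v then -1 else 0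

/-- The ideal generated by the determinants of all `i × i` submatrices of a square matrix. -/
noncomputable def minorsIdeal {S : Type*} [CommRing S] (M : Matrix V V S) (i : ℕ) : Ideal S :=
  Ideal.span { d : S | ∃ f g : Fin i → V, Function.Injective f ∧ Function.Injective g ∧
    d = (M.submatrix f g).det }

/-- The `i`-th critical ideal `I_i(G, X_G) ⊆ R[X_G]` of a simple graph `G`. -/
noncomputable def criticalIdeal (R : Type*) [CommRing R] (G : SimpleGraph V) (i : ℕ) :
    Ideal (MvPolynomial V R) :=
  minorsIdeal (genLaplacian R G) i

/-- The algebraic co-rank `γ_R(G)`: the largest `i` (with `0 ≤ i ≤ |V(G)|`) such that the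
`i`-th critical ideal of `G` over `R` is trivial (i.e. the whole ring). -/
noncomputable def algCoRank (R : Type*) [CommRing R] [Fintype V] (G : SimpleGraph V) : ℕ :=
  sSup {i | i ≤ Fintype.card V ∧ criticalIdeal R G i = ⊤}

/-- The rank of a square matrix over a commutative ring: the largest `k` such that some
`k × k` minor is nonzero and is not a zero divisor. -/
noncomputable def ringRank {R : Type*} [CommRing R] (M : Matrix V V R) : ℕ :=
  sSup {k | ∃ f g : Fin k → V, Function.Injective f ∧ Function.Injective g ∧
    (M.submatrix f g).det ≠ 0 ∧ (M.submatrix f g).det ∈ nonZeroDivisors R}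

/-- `A ∈ S_R(G)`: `A` is a symmetric matrix over `R`, indexed by the vertices of `G`, whose
off-diagonal `(u,v)` entry is nonzero iff `u` and `v` are adjacent (the diagonal is free). -/
def IsGraphMatrix {R : Type*} [CommRing R] (G : SimpleGraph V) (A : Matrix V V R) : Prop :=
  A.IsSymm ∧ ∀ u v : V, u ≠ v → (A u v ≠ 0 ↔ G.Adj u v)

/-- The minimum rank `mr_R(G)`: the smallest rank among matrices in `S_R(G)`. -/
noncomputable def minRank (R : Type*) [CommRing R] (G : SimpleGraph V) : ℕ :=
  sInf {k | ∃ A : Matrix V V R, IsGraphMatrix G A ∧ ringRank A = k}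

/-- The generalized Laplacian of `G` evaluated at a vector `d`: `L(G, d)` has `d u` on the
diagonal, `-1` at adjacent off-diagonal pairs and `0` elsewhere. -/
noncomputable def evalLaplacian {R : Type*} [CommRing R] (G : SimpleGraph V) (d : V → R) :
    Matrix V V R := fun u v =>
  if u = v then d u else if G.Adj u v then -1 else 0

/-- The critical minimum rank `mr^cr_R(G)`: the minimum of `rank (L(G,d))` over `d ∈ R^{V(G)}`. -/
noncomputable def crMinRank (R : Type*) [CommRing R] (G : SimpleGraph V) : ℕ :=
  sInf {k | ∃ d : V → R, ringRank (evalLaplacian G d) = k}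

/-- `a, b : Fin k → V` form a chronological list of forces for the zero forcing game on `G`
started with the vertices of `B` blue: at step `t` the force `a t → b t` is performed, which
requires that `a t` is blue, that `b t` is a white neighbor of `a t`, and that every white
neighbor of `a t` equals `b t`. -/
def IsChronList (G : SimpleGraph V) (B : Set V) {k : ℕ} (a b : Fin k → V) : Prop :=
  (∀ t, G.Adj (a t) (b t)) ∧
  (∀ t, a t ∈ B ∨ ∃ s, s < t ∧ b s = a t) ∧
  (∀ t, b t ∉ B ∧ ∀ s, s < t → b s ≠ b t) ∧
  (∀ t z, G.Adj (a t) z → z ∉ B → (∀ s, s < t → b s ≠ z) → z = b t)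

/-- `B` is a zero forcing set of `G`: starting with exactly `B` blue, there is a sequence of
forces turning every vertex of `G` blue. -/
def IsZeroForcingSet (G : SimpleGraph V) (B : Set V) : Prop :=
  ∃ (k : ℕ) (a b : Fin k → V), IsChronList G B a b ∧ ∀ v : V, v ∈ B ∨ ∃ t, b t = v

/-- The zero forcing number `Z(G)`: the minimum cardinality of a zero forcing set of `G`. -/
noncomputable def zeroForcingNumber [Fintype V] (G : SimpleGraph V) : ℕ :=
  sInf {m | ∃ B : Finset V, B.card = m ∧ IsZeroForcingSet G ↑B}

/-- `mz(G) = |V(G)| - Z(G)`. -/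
noncomputable def mz [Fintype V] (G : SimpleGraph V) : ℕ :=
  Fintype.card V - zeroForcingNumber G

/-- For every finite simple graph `G` and every commutative ring `R` with
unity, `mz(G) ≤ γ_R(G)`: the number of vertices of `G` minus the zero forcing number of `G`
is at most the algebraic co-rank of `G` over `R`. -/
theorem mz_le_algCoRank {V : Type*} [Fintype V] (G : SimpleGraph V)
    (R : Type*) [CommRing R] :
    mz G ≤ algCoRank R G := by
  classical
  -- the whole vertex set is a zero forcing set
  have hne : {m | ∃ B : Finset V, B.card = m ∧ IsZeroForcingSet G ↑B}.Nonempty := by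
    refine ⟨(Finset.univ : Finset V).card, Finset.univ, rfl, 0, Fin.elim0, Fin.elim0, ?_, ?_⟩
    · exact ⟨fun t => t.elim0, fun t => t.elim0, fun t => t.elim0, fun t => t.elim0⟩
    · intro v; left; simp
  obtain ⟨B, hBcard, k, a, b, ⟨h1, h2, h3, h4⟩, hcover⟩ := Nat.sInf_mem hne
  -- b takes values outside B and is injective
  have hbinj : Function.Injective b := by
    intro s t hst
    rcases lt_trichotomy s t with h | h | h
    · exact absurd hst ((h3 t).2 s h)
    · exact h
    · exact absurd hst.symm ((h3 s).2 t h)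
  -- the key "forcing" fact used twice
  have hforce : ∀ s t : Fin k, s < t → ¬ G.Adj (a s) (b t) := by
    intro s t hst hadj
    have := h4 s (b t) hadj (h3 t).1 (fun r hr => (h3 t).2 r (hr.trans hst))
    exact (h3 t).2 s hst this.symm
  have hainj : Function.Injective a := by
    have key : ∀ s t : Fin k, s < t → a s ≠ a t := by
      intro s t hst heq
      exact hforce s t hst (heq ▸ h1 t)
    intro s t hst
    rcases lt_trichotomy s t with h | h | h
    · exact absurd hst (key s t h)
    · exact h
    · exact absurd hst.symm (key t s h)
  -- entries above the diagonal vanish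
  have hzero : ∀ s t : Fin k, s < t → genLaplacian R G (a s) (b t) = 0 := by
    intro s t hst
    have hne' : a s ≠ b t := by
      rcases h2 s with hB | ⟨r, hr, hbr⟩
      · intro h; exact (h3 t).1 (h ▸ hB)
      · intro h; exact (h3 t).2 r (hr.trans hst) (hbr.trans h)
    simp [genLaplacian, hne', hforce s t hst]
  have hdiag : ∀ t : Fin k, genLaplacian R G (a t) (b t) = -1 := by
    intro t
    simp [genLaplacian, (h1 t).ne, h1 t]
  -- mz G ≤ k
  have hm : mz G ≤ k := by
    have hcard : Fintype.card {v : V // v ∉ B} ≤ k := by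
      have hfun : ∀ v : {v : V // v ∉ B}, ∃ t, b t = v.1 := by
        intro v
        refine (hcover v.1).resolve_left ?_
        simpa using v.2
      choose τ hτ using hfun
      have hτinj : Function.Injective τ := by
        intro u v h
        apply Subtype.ext
        rw [← hτ u, ← hτ v, h]
      simpa using Fintype.card_le_of_injective τ hτinj
    have hcompl : Fintype.card {v : V // v ∉ B} = Fintype.card V - B.card := by
      simp [Fintype.card_subtype_compl]
    have : Fintype.card V - B.card ≤ k := hcompl ▸ hcard
    simpa [mz, zeroForcingNumber, hBcard] using this
  -- build the size (mz G) minor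
  set m := mz G with hmdef
  set f : Fin m → V := a ∘ Fin.castLE hm with hf
  set g : Fin m → V := b ∘ Fin.castLE hm with hg
  have hfinj : Function.Injective f := hainj.comp (Fin.castLE_injective hm)
  have hginj : Function.Injective g := hbinj.comp (Fin.castLE_injective hm)
  have hdet : ((genLaplacian R G).submatrix f g).det = (-1 : MvPolynomial V R) ^ m := by
    rw [Matrix.det_of_lowerTriangular _ ?_]
    · simp only [Matrix.submatrix_apply, hf, hg, Function.comp_apply]
      rw [Finset.prod_congr rfl (fun t _ => hdiag (Fin.castLE hm t))]
      simp
    · intro s t hst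
      exact hzero _ _ (show (s : ℕ) < (t : ℕ) from hst)
  have htop : criticalIdeal R G m = ⊤ := by
    apply Ideal.eq_top_of_isUnit_mem _ (x := ((-1 : MvPolynomial V R)) ^ m)
    · exact Ideal.subset_span ⟨f, g, hfinj, hginj, hdet.symm⟩
    · exact (isUnit_one.neg).pow m
  have hbdd : BddAbove {i | i ≤ Fintype.card V ∧ criticalIdeal R G i = ⊤} :=
    ⟨Fintype.card V, fun i hi => hi.1⟩
  exact le_csSup hbdd ⟨Nat.sub_le _ _, htop⟩
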